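/- For the anti-Fibonacci sequence A (OEIS A075326), defined by A_0 = 0 and the rule that A_n is the sum of the two most recent positive integers not appearing in the sequence A, one has A(n) - 5n + 2 = PD(n-1) for all n ≥ 1, where PD is the period-doubling sequence (the fixed point of the substitution 0 ↦ 01, 1 ↦ 00, indexed from 0). -/
import Mathlib

/-- `A` and `B` (indexed from 1) are complementary strictly increasing sequences
of positive integers: every positive integer lies in exactly one of their ranges. -/
def CompPair (A B : ℕ → ℕ) : Prop :=
  StrictMonoOn A (Set.Ici 1) ∧ StrictMonoOn B (Set.Ici 1) ∧
  (∀ n, 1 ≤ n → 1 ≤ A n) ∧ (∀ n, 1 ≤ n → 1 ≤ B n) ∧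
  ∀ m, 1 ≤ m →
    ((∃ n, 1 ≤ n ∧ A n = m) ∧ ¬(∃ n, 1 ≤ n ∧ B n = m)) ∨
    (¬(∃ n, 1 ≤ n ∧ A n = m) ∧ (∃ n, 1 ≤ n ∧ B n = m))

/-- `(A, B)` is the anti-recurrence pair for the positive linear form `a` of dimension `k`:
`A n = Σ_{j=1}^k a_j * B_{(n-1)k+j}` for all `n ≥ 1`. -/
def AntiRec (k : ℕ) (a : Fin k → ℕ) (A B : ℕ → ℕ) : Prop :=
  CompPair A B ∧
  ∀ n, 1 ≤ n → A n = ∑ j : Fin k, a j * B ((n - 1) * k + (j : ℕ) + 1)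

/-- The period-doubling sequence, fixed point of 0 ↦ 01, 1 ↦ 00, indexed from 0. -/
def PD (n : ℕ) : ℕ := (padicValNat 2 (n + 1)) % 2

lemma PD_le (j : ℕ) : PD j ≤ 1 := Nat.lt_succ_iff.mp (Nat.mod_lt _ two_pos)

lemma PD_even (j : ℕ) : PD (2 * j) = 0 := by
  unfold PD
  rw [padicValNat.eq_zero_of_not_dvd (by omega)]

lemma PD_odd (j : ℕ) : PD (2 * j + 1) = 1 - PD j := by
  haveI : Fact (Nat.Prime 2) := ⟨by norm_num⟩
  unfold PD
  have h : 2 * j + 1 + 1 = 2 * (j + 1) := by ring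
  rw [h, padicValNat.mul (by norm_num) (by omega), padicValNat.self (by norm_num)]
  omega

/-- The explicit complement sequence. -/
def bb (m : ℕ) : ℕ :=
  5 * (m / 4) + m % 4 + (if m % 4 = 3 then PD (2 * (m / 4) + 1) else 0)

lemma bb0 (s : ℕ) : bb (4 * s) = 5 * s := by
  have h1 : (4 * s) / 4 = s := by omega
  have h2 : (4 * s) % 4 = 0 := by omega
  simp [bb, h1, h2]

lemma bb1 (s : ℕ) : bb (4 * s + 1) = 5 * s + 1 := by
  have h1 : (4 * s + 1) / 4 = s := by omega
  have h2 : (4 * s + 1) % 4 = 1 := by omega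
  simp [bb, h1, h2]

lemma bb2 (s : ℕ) : bb (4 * s + 2) = 5 * s + 2 := by
  have h1 : (4 * s + 2) / 4 = s := by omega
  have h2 : (4 * s + 2) % 4 = 2 := by omega
  simp [bb, h1, h2]

lemma bb3 (s : ℕ) : bb (4 * s + 3) = 5 * s + 3 + PD (2 * s + 1) := by
  have h1 : (4 * s + 3) / 4 = s := by omega
  have h2 : (4 * s + 3) % 4 = 3 := by omega
  simp [bb, h1, h2]

lemma bb_cases (m : ℕ) : ∃ s r, r < 4 ∧ m = 4 * s + r := ⟨m / 4, m % 4, by omega, by omega⟩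

lemma bb_mono : StrictMono bb := by
  apply strictMono_nat_of_lt_succ
  intro m
  obtain ⟨s, r, hr, rfl⟩ := bb_cases m
  interval_cases r
  · rw [show 4 * s + 0 = 4 * s from by ring, show 4 * s + 1 = 4 * s + 1 from rfl, bb0, bb1]
    omega
  · rw [show 4 * s + 1 + 1 = 4 * s + 2 from by ring, bb1, bb2]
    omega
  · rw [show 4 * s + 2 + 1 = 4 * s + 3 from by ring, bb2, bb3]
    omega
  · rw [show 4 * s + 3 + 1 = 4 * (s + 1) from by ring, bb3, bb0]
    have := PD_le (2 * s + 1)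
    omega

lemma bb_pos (m : ℕ) (hm : 1 ≤ m) : 1 ≤ bb m := by
  have h0 : bb 0 = 0 := by simp [bb]
  rcases Nat.eq_or_lt_of_le (Nat.zero_le m) with h | h
  · omega
  · have := bb_mono h
    omega

/-- The explicit anti-Fibonacci sequence. -/
def aa (n : ℕ) : ℕ := bb (2 * n - 1) + bb (2 * n)

lemma aa_succ (t : ℕ) : aa (t + 1) = 5 * t + 3 + PD t := by
  have h : 2 * (t + 1) - 1 = 2 * t + 1 := by omega
  have h' : 2 * (t + 1) = 2 * t + 2 := by ring
  unfold aa
  rw [h, h']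
  rcases Nat.even_or_odd t with ⟨u, hu⟩ | ⟨u, hu⟩
  · subst hu
    rw [show 2 * (u + u) + 1 = 4 * u + 1 from by ring,
        show 2 * (u + u) + 2 = 4 * u + 2 from by ring, bb1, bb2,
        show u + u = 2 * u from by ring, PD_even]
    omega
  · subst hu
    rw [show 2 * (2 * u + 1) + 1 = 4 * u + 3 from by ring,
        show 2 * (2 * u + 1) + 2 = 4 * (u + 1) from by ring, bb3, bb0]
    omega

lemma aa_gt (t : ℕ) : bb (2 * (t + 1)) < aa (t + 1) := by
  unfold aa
  have h : 1 ≤ bb (2 * (t + 1) - 1) := bb_pos _ (by omega)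
  omega

lemma excl (t m : ℕ) (hm : 1 ≤ m) : aa (t + 1) ≠ bb m := by
  obtain ⟨s, r, hr, rfl⟩ := bb_cases m
  rw [aa_succ]
  have h1 := PD_le t
  interval_cases r
  · rw [show 4 * s + 0 = 4 * s from by ring, bb0]; omega
  · rw [bb1]; omega
  · rw [bb2]; omega
  · rw [bb3]
    have h2 := PD_le (2 * s + 1)
    intro heq
    have hts : t = s ∧ PD t = PD (2 * s + 1) := by omega
    obtain ⟨rfl, h3⟩ := hts
    have h4 := PD_odd t
    omega

lemma exhaustive (y : ℕ) (hy : 1 ≤ y) :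
    (∃ t, aa (t + 1) = y) ∨ (∃ m, 1 ≤ m ∧ bb m = y) := by
  obtain ⟨t, r, hr, rfl⟩ : ∃ t r, r < 5 ∧ y = 5 * t + r :=
    ⟨y / 5, y % 5, by omega, by omega⟩
  have h0 := PD_le t
  have hodd := PD_odd t
  interval_cases r
  · exact Or.inr ⟨4 * t, by omega, by rw [bb0]; omega⟩
  · exact Or.inr ⟨4 * t + 1, by omega, by rw [bb1]⟩
  · exact Or.inr ⟨4 * t + 2, by omega, by rw [bb2]⟩
  · by_cases hp : PD t = 0
    · exact Or.inl ⟨t, by rw [aa_succ]; omega⟩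
    · exact Or.inr ⟨4 * t + 3, by omega, by rw [bb3]; omega⟩
  · by_cases hp : PD t = 1
    · exact Or.inl ⟨t, by rw [aa_succ]; omega⟩
    · exact Or.inr ⟨4 * t + 3, by omega, by rw [bb3]; omega⟩

/-- Zaslavsky's formula for the anti-Fibonacci numbers: A(n) - 5n + 2 = PD(n-1). -/
theorem stmt0 (A B : ℕ → ℕ) (h : AntiRec 2 ![1, 1] A B) (h0 : A 0 = 0) :
    ∀ n, 1 ≤ n → (A n : ℤ) - 5 * n + 2 = PD (n - 1) := by
  obtain ⟨⟨hAmono, hBmono, hApos, hBpos, hcomp⟩, hrec⟩ := h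
  have hA : ∀ t : ℕ, A (t + 1) = B (2 * t + 1) + B (2 * t + 2) := by
    intro t
    have hr := hrec (t + 1) (by omega)
    rw [Fin.sum_univ_two] at hr
    simp only [Matrix.cons_val_zero, Matrix.cons_val_one, Matrix.head_cons, one_mul,
      Nat.add_sub_cancel, Fin.val_zero, Fin.val_one] at hr
    rw [hr]
    congr 1 <;> congr 1 <;> ring
  have hB : ∀ m, 1 ≤ m → B m = bb m := by
    intro m
    induction m using Nat.strong_induction_on with
    | _ m IH =>
      intro hm
      rcases lt_trichotomy (B m) (bb m) with hlt | heq | hgt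
      · exfalso
        have hy1 : 1 ≤ B m := hBpos m hm
        rcases exhaustive (B m) hy1 with ⟨s, hs⟩ | ⟨i, hi1, hi2⟩
        · -- aa (s+1) = B m : contradiction with complementarity
          have hgt2 : bb (2 * (s + 1)) < bb m := by
            have := aa_gt s; omega
          have hlt2 : 2 * (s + 1) < m := bb_mono.lt_iff_lt.mp hgt2
          have hAval : A (s + 1) = B m := by
            rw [hA s, IH (2 * s + 1) (by omega) (by omega), IH (2 * s + 2) (by omega) (by omega)]
            have : aa (s + 1) = bb (2 * s + 1) + bb (2 * s + 2) := by
              unfold aa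
              congr 1 <;> congr 1 <;> omega
            omega
          rcases hcomp (B m) hy1 with ⟨_, hnB⟩ | ⟨hnA, _⟩
          · exact hnB ⟨m, hm, rfl⟩
          · exact hnA ⟨s + 1, by omega, hAval⟩
        · -- bb i = B m with bb i < bb m, so i < m, contradiction with B strict mono
          have hilt : i < m := bb_mono.lt_iff_lt.mp (by omega)
          have := IH i hilt hi1
          have hBi : B i < B m := hBmono (Set.mem_Ici.mpr hi1) (Set.mem_Ici.mpr hm) hilt
          omega
      · exact heq
      · exfalso
        have hy1 : 1 ≤ bb m := bb_pos m hm
        rcases hcomp (bb m) hy1 with ⟨⟨n, hn1, hn2⟩, _⟩ | ⟨_, ⟨i, hi1, hi2⟩⟩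
        · -- A n = bb m
          obtain ⟨s, rfl⟩ : ∃ s, n = s + 1 := ⟨n - 1, by omega⟩
          have hBs : B (2 * s + 2) < bb m := by
            have h1 : 1 ≤ B (2 * s + 1) := hBpos _ (by omega)
            have := hA s
            omega
          have hlt2 : 2 * s + 2 < m := by
            by_contra hc
            have : B m ≤ B (2 * s + 2) := by
              rcases Nat.eq_or_lt_of_le (Nat.le_of_not_lt hc) with he | hl
              · rw [he]
              · exact le_of_lt (hBmono (Set.mem_Ici.mpr hm) (Set.mem_Ici.mpr (by omega)) hl)
            omega
          have hAval : A (s + 1) = aa (s + 1) := by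
            rw [hA s, IH (2 * s + 1) (by omega) (by omega), IH (2 * s + 2) (by omega) (by omega)]
            unfold aa
            congr 1 <;> congr 1 <;> omega
          exact excl s m hm (by omega)
        · -- B i = bb m
          have hilt : i < m := by
            by_contra hc
            have : B m ≤ B i := by
              rcases Nat.eq_or_lt_of_le (Nat.le_of_not_lt hc) with he | hl
              · rw [he]
              · exact le_of_lt (hBmono (Set.mem_Ici.mpr hm) (Set.mem_Ici.mpr hi1) hl)
            omega
          have hBi := IH i hilt hi1
          have : i = m := bb_mono.injective (by omega)
          omega
  intro n hn
  obtain ⟨t, rfl⟩ : ∃ t, n = t + 1 := ⟨n - 1, by omega⟩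
  have hAval : A (t + 1) = 5 * t + 3 + PD t := by
    rw [hA t, hB (2 * t + 1) (by omega), hB (2 * t + 2) (by omega), ← aa_succ t]
    unfold aa
    congr 1 <;> congr 1 <;> omega
  have ht : t + 1 - 1 = t := by omega
  rw [hAval, ht]
  push_cast
  ring
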